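/- Let n ≥ 1, let Q = D_{2n} be the dihedral group of order 2n, let P be a subgroup of Q of order 2 generated by a reflection, let (id_P : P → P) be the identity crossed module on P, and let ι : P → Q be the inclusion. Then for any induced crossed module (∂ : I → Q, j) of (id_P : P → P) along ι, the group I is isomorphic to D_{2n}. Moreover, if n is odd then ∂ : I → Q is an isomorphism, while if n is even then ker ∂ has order 2 and the image of ∂ has index 2 in Q. -/

import Mathlib

universe u

/-- A crossed module `(μ : M → P)`: groups `M`, `P`, a (right) action of `P` on `M` by
group automorphisms, written `act m p` for `m ^ p`, and a homomorphism `μ : M →* P`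
satisfying CM1: `μ (m ^ p) = p⁻¹ * μ m * p` and CM2: `n ^ (μ m) = m⁻¹ * n * m`. -/
structure CrossedModule (M P : Type u) [Group M] [Group P] where
  μ : M →* P
  act : M → P → M
  act_mul : ∀ m n p, act (m * n) p = act m p * act n p
  act_one : ∀ m, act m 1 = m
  act_act : ∀ m p q, act (act m p) q = act m (p * q)
  cm1 : ∀ m p, μ (act m p) = p⁻¹ * μ m * p
  cm2 : ∀ m n, act n (μ m) = m⁻¹ * n * m

/-- A morphism of crossed modules `(f, g) : (μ : M → P) → (ν : N → Q)`:
group homomorphisms `f : M → N`, `g : P → Q` with `ν ∘ f = g ∘ μ` and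
`f (m ^ p) = (f m) ^ (g p)`. -/
def CrossedModule.IsMorphism {M P N Q : Type u} [Group M] [Group P] [Group N] [Group Q]
    (X : CrossedModule M P) (Y : CrossedModule N Q) (f : M →* N) (g : P →* Q) : Prop :=
  (∀ m, Y.μ (f m) = g (X.μ m)) ∧ ∀ m p, f (X.act m p) = Y.act (f m) (g p)

/-- `(∂ : I → Q)` together with `j : M → I` is an induced crossed module of `(μ : M → P)`
along `ι : P → Q`: `(j, ι)` is a morphism of crossed modules, and for every crossed module
`(ν : N → Q)` and morphism `(f, ι) : (μ : M → P) → (ν : N → Q)` there is a unique group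
homomorphism `φ : I → N` with `ν ∘ φ = ∂`, `φ (x ^ q) = (φ x) ^ q`, and `φ ∘ j = f`. -/
def IsInducedCrossedModule {M P Q I : Type u} [Group M] [Group P] [Group Q] [Group I]
    (X : CrossedModule M P) (ι : P →* Q) (Y : CrossedModule I Q) (j : M →* I) : Prop :=
  CrossedModule.IsMorphism X Y j ι ∧
  ∀ (N : Type u) [Group N] (Z : CrossedModule N Q) (f : M →* N),
    CrossedModule.IsMorphism X Z f ι →
    ∃! φ : I →* N, (∀ x, Z.μ (φ x) = Y.μ x) ∧
      (∀ x q, φ (Y.act x q) = Z.act (φ x) q) ∧ ∀ m, φ (j m) = f m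

/-- The identity crossed module `(id_P : P → P)` with `P` acting on itself by
conjugation, `m ^ p = p⁻¹ * m * p`. -/
def conjCM (P : Type u) [Group P] : CrossedModule P P where
  μ := MonoidHom.id P
  act m p := p⁻¹ * m * p
  act_mul m n p := by group
  act_one m := by group
  act_act m p q := by group
  cm1 m p := rfl
  cm2 m n := rfl

namespace InducedAux

lemma act_one_left {M P : Type u} [Group M] [Group P] (Z : CrossedModule M P) (q : P) :
    Z.act 1 q = 1 := by
  have h := Z.act_mul 1 1 q
  rw [one_mul] at h
  exact (mul_eq_left.mp h.symm)

variable {n : ℕ}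

def bdf (i : ZMod n) : DihedralGroup n → DihedralGroup n
  | .r k => .r (k + k)
  | .sr k => .sr (i + k + k)

def bd (i : ZMod n) : DihedralGroup n →* DihedralGroup n where
  toFun := bdf i
  map_one' := by
    show DihedralGroup.r (0+0) = DihedralGroup.r 0
    rw [add_zero]
  map_mul' := by
    rintro (a | a) (b | b) <;>
      simp only [DihedralGroup.r_mul_r, DihedralGroup.r_mul_sr, DihedralGroup.sr_mul_r,
        DihedralGroup.sr_mul_sr, bdf] <;> (apply congrArg; ring)

def dact (i : ZMod n) : DihedralGroup n → DihedralGroup n → DihedralGroup n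
  | .r k, .r _ => .r k
  | .r k, .sr _ => .r (-k)
  | .sr k, .r m => .sr (k + m)
  | .sr k, .sr m => .sr (m - k - i)

lemma inv_r (k : ZMod n) : (DihedralGroup.r k)⁻¹ = DihedralGroup.r (-k) := rfl
lemma inv_sr (k : ZMod n) : (DihedralGroup.sr k)⁻¹ = DihedralGroup.sr k := rfl

def Y0 (i : ZMod n) : CrossedModule (DihedralGroup n) (DihedralGroup n) where
  μ := bd i
  act := dact i
  act_mul := by
    rintro (a | a) (b | b) (p | p) <;>
      simp only [DihedralGroup.r_mul_r, DihedralGroup.r_mul_sr, DihedralGroup.sr_mul_r,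
        DihedralGroup.sr_mul_sr, dact] <;> (apply congrArg; ring)
  act_one := by
    rintro (a | a) <;> simp only [DihedralGroup.one_def, dact] <;> (apply congrArg; ring)
  act_act := by
    rintro (a | a) (p | p) (q | q) <;>
      simp only [DihedralGroup.r_mul_r, DihedralGroup.r_mul_sr, DihedralGroup.sr_mul_r,
        DihedralGroup.sr_mul_sr, dact] <;> (apply congrArg; ring)
  cm1 := by
    rintro (a | a) (p | p) <;>
      simp only [inv_r, inv_sr, DihedralGroup.r_mul_r, DihedralGroup.r_mul_sr,
        DihedralGroup.sr_mul_r, DihedralGroup.sr_mul_sr, dact, bd, bdf,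
        MonoidHom.coe_mk, OneHom.coe_mk] <;> (apply congrArg; ring)
  cm2 := by
    rintro (a | a) (p | p) <;>
      simp only [inv_r, inv_sr, DihedralGroup.r_mul_r, DihedralGroup.r_mul_sr,
        DihedralGroup.sr_mul_r, DihedralGroup.sr_mul_sr, dact, bd, bdf,
        MonoidHom.coe_mk, OneHom.coe_mk] <;> (apply congrArg; ring)

variable (i : ZMod n) (P : Subgroup (DihedralGroup n))
  (hP : P = Subgroup.zpowers (DihedralGroup.sr i))

def tP : ↥P := ⟨.sr i, hP ▸ Subgroup.mem_zpowers _⟩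

lemma tP_mul_tP : tP i P hP * tP i P hP = 1 := by
  ext
  show DihedralGroup.sr i * DihedralGroup.sr i = 1
  rw [DihedralGroup.sr_mul_self]

lemma tP_ne_one : tP i P hP ≠ 1 := by
  intro h
  have h2 : DihedralGroup.sr i = 1 := congrArg Subtype.val h
  rw [DihedralGroup.one_def] at h2
  cases h2

lemma eq_one_or_tP (x : ↥P) : x = 1 ∨ x = tP i P hP := by
  obtain ⟨z, hz⟩ := (show x.1 ∈ Subgroup.zpowers (DihedralGroup.sr i) from hP ▸ x.2)
  have hsq : DihedralGroup.sr i ^ (2:ℤ) = 1 := by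
    rw [zpow_two, DihedralGroup.sr_mul_self]
  simp only at hz
  rcases Int.even_or_odd z with ⟨m, hm⟩ | ⟨m, hm⟩
  · left
    have h1 : x.1 = 1 := by rw [← hz, hm, ← two_mul, zpow_mul, hsq, one_zpow]
    exact Subtype.ext h1
  · right
    have h1 : x.1 = DihedralGroup.sr i := by
      rw [← hz, hm, zpow_add, zpow_mul, hsq, one_zpow, one_mul, zpow_one]
    exact Subtype.ext h1

def j0fun : ↥P → DihedralGroup n := fun x =>
  if x = tP i P hP then .sr 0 else 1

lemma j0fun_one : j0fun i P hP 1 = 1 := if_neg (Ne.symm (tP_ne_one i P hP))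

lemma j0fun_tP : j0fun i P hP (tP i P hP) = .sr 0 := if_pos rfl

lemma j0fun_mul (x y : ↥P) :
    j0fun i P hP (x * y) = j0fun i P hP x * j0fun i P hP y := by
  rcases eq_one_or_tP i P hP x with rfl | rfl <;>
    rcases eq_one_or_tP i P hP y with rfl | rfl
  · rw [one_mul, j0fun_one, one_mul]
  · rw [one_mul, j0fun_one, one_mul]
  · rw [mul_one, j0fun_one, mul_one]
  · rw [tP_mul_tP, j0fun_one, j0fun_tP, DihedralGroup.sr_mul_sr, sub_self,
      DihedralGroup.one_def]

def j0 : ↥P →* DihedralGroup n where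
  toFun := j0fun i P hP
  map_one' := j0fun_one i P hP
  map_mul' := j0fun_mul i P hP

lemma j0_tP : j0 i P hP (tP i P hP) = .sr 0 := j0fun_tP i P hP

lemma conj_act_eq (hP : P = Subgroup.zpowers (DihedralGroup.sr i)) (m p : ↥P) :
    (conjCM ↥P).act m p = m := by
  show p⁻¹ * m * p = m
  rcases eq_one_or_tP i P hP m with rfl | rfl <;>
    rcases eq_one_or_tP i P hP p with rfl | rfl
  · group
  · group
  · group
  · have h2 := tP_mul_tP i P hP
    have hinv : (tP i P hP)⁻¹ = tP i P hP := inv_eq_of_mul_eq_one_right h2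
    rw [hinv, mul_assoc, h2, mul_one]

lemma j0_morphism : CrossedModule.IsMorphism (conjCM ↥P) (Y0 i) (j0 i P hP) P.subtype := by
  constructor
  · intro m
    rcases eq_one_or_tP i P hP m with rfl | rfl
    · rw [map_one, map_one]; rfl
    · rw [j0_tP]
      show DihedralGroup.sr (i + 0 + 0) = DihedralGroup.sr i
      rw [add_zero, add_zero]
  · intro m p
    rw [conj_act_eq i P hP]
    rcases eq_one_or_tP i P hP m with rfl | rfl <;>
      rcases eq_one_or_tP i P hP p with rfl | rfl
    · simp only [map_one]
      rw [(Y0 i).act_one]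
    · simp only [map_one]
      rw [act_one_left]
    · simp only [map_one]
      rw [(Y0 i).act_one]
    · rw [j0_tP]
      show DihedralGroup.sr 0 = DihedralGroup.sr (i - 0 - i)
      apply congrArg; ring

end InducedAux
section UP

variable {n : ℕ} (i : ZMod n) {N : Type} [Group N]
  (Z : CrossedModule N (DihedralGroup n)) (u : N)

/-- `UU k = u ^ (r k)`, the conjugates generating the induced crossed module. -/
def UU (k : ZMod n) : N := Z.act u (.r k)

lemma UU_zero : UU Z u 0 = u := by
  rw [UU, ← DihedralGroup.one_def, Z.act_one]

lemma UU_act_r (k m : ZMod n) : Z.act (UU Z u k) (.r m) = UU Z u (k + m) := by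
  rw [UU, UU, Z.act_act, DihedralGroup.r_mul_r]

lemma u_act_sr (hsru : Z.act u (.sr i) = u) (m : ZMod n) :
    Z.act u (.sr m) = UU Z u (m - i) := by
  have h1 : (DihedralGroup.sr i : DihedralGroup n) * .r (m - i) = .sr m := by
    rw [DihedralGroup.sr_mul_r]
    apply congrArg; ring
  rw [← h1, ← Z.act_act, hsru, UU]

lemma UU_act_sr (hsru : Z.act u (.sr i) = u) (k m : ZMod n) :
    Z.act (UU Z u k) (.sr m) = UU Z u (m - k - i) := by
  rw [UU, Z.act_act, DihedralGroup.r_mul_sr, u_act_sr i Z u hsru]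

lemma μ_UU (hμu : Z.μ u = .sr i) (k : ZMod n) :
    Z.μ (UU Z u k) = .sr (i + k + k) := by
  rw [UU, Z.cm1, hμu, InducedAux.inv_r, DihedralGroup.r_mul_sr, DihedralGroup.sr_mul_r]
  apply congrArg; ring

lemma UU_sq (hu2 : u * u = 1) (k : ZMod n) : UU Z u k * UU Z u k = 1 := by
  rw [UU, ← Z.act_mul, hu2, InducedAux.act_one_left]

lemma UU_inv (hu2 : u * u = 1) (k : ZMod n) : (UU Z u k)⁻¹ = UU Z u k :=
  inv_eq_of_mul_eq_one_right (UU_sq Z u hu2 k)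

lemma UU_R (hu2 : u * u = 1) (hμu : Z.μ u = .sr i) (hsru : Z.act u (.sr i) = u)
    (a b : ZMod n) : UU Z u b * UU Z u a * UU Z u b = UU Z u (b + b - a) := by
  have h := Z.cm2 (UU Z u b) (UU Z u a)
  rw [μ_UU i Z u hμu, UU_act_sr i Z u hsru, UU_inv Z u hu2] at h
  have h2 : i + b + b - a - i = b + b - a := by ring
  rw [h2] at h
  exact h.symm

lemma u_s_pow_u (hu2 : u * u = 1) (m : ℕ) :
    u * (u * UU Z u 1) ^ m * u = ((u * UU Z u 1) ^ m)⁻¹ := by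
  have huinv : u⁻¹ = u := inv_eq_of_mul_eq_one_right hu2
  have h1 : u * (u * UU Z u 1) * u⁻¹ = (u * UU Z u 1)⁻¹ := by
    rw [mul_inv_rev, UU_inv Z u hu2, huinv, ← mul_assoc, hu2, one_mul]
  calc u * (u * UU Z u 1) ^ m * u = u * (u * UU Z u 1) ^ m * u⁻¹ := by rw [huinv]
    _ = (u * (u * UU Z u 1) * u⁻¹) ^ m := (conj_pow).symm
    _ = ((u * UU Z u 1)⁻¹) ^ m := by rw [h1]
    _ = ((u * UU Z u 1) ^ m)⁻¹ := by rw [inv_pow]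

lemma UU_key (hu2 : u * u = 1) (hμu : Z.μ u = .sr i) (hsru : Z.act u (.sr i) = u)
    (k : ℕ) : UU Z u ((k : ℕ) : ZMod n) = u * (u * UU Z u 1) ^ k := by
  set s : N := u * UU Z u 1 with hs
  have main : ∀ m : ℕ, UU Z u ((m : ℕ) : ZMod n) = u * s ^ m ∧
      UU Z u ((m + 1 : ℕ) : ZMod n) = u * s ^ (m + 1) := by
    intro m
    induction m with
    | zero =>
      constructor
      · rw [Nat.cast_zero, UU_zero, pow_zero, mul_one]
      · rw [Nat.cast_one, pow_one, hs, ← mul_assoc, hu2, one_mul]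
    | succ m ih =>
      refine ⟨ih.2, ?_⟩
      have hcast : ((m + 2 : ℕ) : ZMod n) =
          ((m + 1 : ℕ) : ZMod n) + ((m + 1 : ℕ) : ZMod n) - ((m : ℕ) : ZMod n) := by
        push_cast; ring
      rw [hcast, ← UU_R i Z u hu2 hμu hsru, ih.1, ih.2]
      have h2 : (u * s ^ m) * (u * s ^ (m + 1)) = s := by
        have e := u_s_pow_u Z u hu2 m
        rw [← hs] at e
        calc (u * s ^ m) * (u * s ^ (m + 1)) = (u * s ^ m * u) * s ^ (m + 1) := by group
          _ = (s ^ m)⁻¹ * s ^ (m + 1) := by rw [e]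
          _ = s := by group
      rw [mul_assoc, h2, mul_assoc, ← pow_succ]
  exact (main k).1

lemma UU_hK (hn : 1 ≤ n) (hu2 : u * u = 1) (hμu : Z.μ u = .sr i)
    (hsru : Z.act u (.sr i) = u) (a b : ZMod n) :
    UU Z u a * (u * UU Z u b) = UU Z u (a + b) := by
  haveI : NeZero n := ⟨by omega⟩
  obtain ⟨a', rfl⟩ := ZMod.natCast_zmod_surjective (n := n) a
  obtain ⟨b', rfl⟩ := ZMod.natCast_zmod_surjective (n := n) b
  set s : N := u * UU Z u 1 with hs
  have h1 := UU_key i Z u hu2 hμu hsru a'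
  have h2 := UU_key i Z u hu2 hμu hsru b'
  have h3 : ((a' : ZMod n) + (b' : ZMod n)) = ((a' + b' : ℕ) : ZMod n) := by push_cast; ring
  rw [h1, h2, h3, UU_key i Z u hu2 hμu hsru (a' + b'), ← hs]
  rw [show u * s ^ a' * (u * (u * s ^ b')) = u * s ^ a' * (u * u) * s ^ b' by group, hu2]
  rw [pow_add]
  group

lemma UU_hM2 (hn : 1 ≤ n) (hu2 : u * u = 1) (hμu : Z.μ u = .sr i)
    (hsru : Z.act u (.sr i) = u) (a b : ZMod n) :
    u * UU Z u a * UU Z u b = UU Z u (b - a) := by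
  have h0 : u * UU Z u a * u = UU Z u (-a) := by
    have := UU_R i Z u hu2 hμu hsru a 0
    rw [UU_zero, zero_add, zero_sub] at this
    exact this
  have h1 : u * UU Z u a = UU Z u (-a) * u := by
    rw [← h0, mul_assoc, hu2, mul_one]
  rw [h1, mul_assoc, UU_hK i Z u hn hu2 hμu hsru]
  apply congrArg; ring

lemma UU_hM4 (hn : 1 ≤ n) (hu2 : u * u = 1) (hμu : Z.μ u = .sr i)
    (hsru : Z.act u (.sr i) = u) (a b : ZMod n) :
    UU Z u a * UU Z u b = u * UU Z u (b - a) := by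
  rw [← UU_hM2 i Z u hn hu2 hμu hsru a b, ← mul_assoc, ← mul_assoc, hu2, one_mul]

end UP

open InducedAux

theorem Y0_induced {n : ℕ} (hn : 1 ≤ n) (i : ZMod n) (P : Subgroup (DihedralGroup n))
    (hP : P = Subgroup.zpowers (DihedralGroup.sr i)) :
    IsInducedCrossedModule (conjCM ↥P) P.subtype (Y0 i) (j0 i P hP) := by
  refine ⟨j0_morphism i P hP, ?_⟩
  intro N _ Z f hf
  set u : N := f (tP i P hP) with hu
  have hu2 : u * u = 1 := by rw [hu, ← map_mul, tP_mul_tP, map_one]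
  have hμu : Z.μ u = .sr i := hf.1 (tP i P hP)
  have hsru : Z.act u (.sr i) = u := by
    have h := hf.2 (tP i P hP) (tP i P hP)
    rw [conj_act_eq i P hP] at h
    exact h.symm
  have hK := UU_hK i Z u hn hu2 hμu hsru
  have hM2 := UU_hM2 i Z u hn hu2 hμu hsru
  have hM4 := UU_hM4 i Z u hn hu2 hμu hsru
  have hU0 := UU_zero Z u
  have hUr := UU_act_r Z u
  have hUsr := UU_act_sr i Z u hsru
  have husr := u_act_sr i Z u hsru
  have hμU := μ_UU i Z u hμu
  have hUU : ∀ m : ZMod n, Z.act u (.r m) = UU Z u m := fun _ => rfl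
  let φf : DihedralGroup n → N := fun x => match x with
    | .r k => u * UU Z u k
    | .sr k => UU Z u k
  have hmul : ∀ a b : DihedralGroup n, φf (a * b) = φf a * φf b := by
    rintro (a | a) (b | b)
    · show u * UU Z u (a + b) = (u * UU Z u a) * (u * UU Z u b)
      rw [mul_assoc, hK]
    · show UU Z u (b - a) = (u * UU Z u a) * UU Z u b
      exact (hM2 a b).symm
    · show UU Z u (a + b) = UU Z u a * (u * UU Z u b)
      exact (hK a b).symm
    · show u * UU Z u (b - a) = UU Z u a * UU Z u b
      exact (hM4 a b).symm
  refine ⟨MonoidHom.mk' φf hmul, ⟨?_, ?_, ?_⟩, ?_⟩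
  · rintro (k | k)
    · show Z.μ (u * UU Z u k) = (Y0 i).μ (.r k)
      rw [map_mul, hμu, hμU]
      show _ = DihedralGroup.r (k + k)
      rw [DihedralGroup.sr_mul_sr]
      apply congrArg; ring
    · show Z.μ (UU Z u k) = (Y0 i).μ (.sr k)
      rw [hμU]
      rfl
  · rintro (k | k) (m | m)
    · show u * UU Z u k = Z.act (u * UU Z u k) (.r m)
      rw [Z.act_mul, hUU, hUr, hM4]
      have : k + m - m = k := by ring
      rw [this]
    · show u * UU Z u (-k) = Z.act (u * UU Z u k) (.sr m)
      rw [Z.act_mul, husr, hUsr, hM4]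
      have : m - k - i - (m - i) = -k := by ring
      rw [this]
    · show UU Z u (k + m) = Z.act (UU Z u k) (.r m)
      rw [hUr]
    · show UU Z u (m - k - i) = Z.act (UU Z u k) (.sr m)
      rw [hUsr]
  · intro m
    rcases eq_one_or_tP i P hP m with rfl | rfl
    · rw [map_one, map_one, map_one]
    · rw [j0_tP]
      show UU Z u 0 = u
      rw [hU0]
  · rintro ψ ⟨hψ1, hψ2, hψ3⟩
    have hψtP : ψ (.sr 0) = u := by
      have h := hψ3 (tP i P hP)
      rw [j0_tP] at h
      exact h
    have hψsr : ∀ k : ZMod n, ψ (.sr k) = UU Z u k := by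
      intro k
      have h1 : (Y0 i).act (.sr 0) (.r k) = .sr k := by
        show DihedralGroup.sr (0 + k) = DihedralGroup.sr k
        rw [zero_add]
      rw [← h1, hψ2, hψtP]
      rfl
    apply MonoidHom.ext
    rintro (k | k)
    · have h2 : (DihedralGroup.sr 0 : DihedralGroup n) * .sr k = .r k := by
        rw [DihedralGroup.sr_mul_sr, sub_zero]
      show ψ (.r k) = u * UU Z u k
      rw [← h2, map_mul, hψsr, hψsr, hU0]
    · rw [hψsr]
      rfl

lemma bd_bijective_odd {n : ℕ} (hn : 1 ≤ n) (i : ZMod n) (hodd : Odd n) :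
    Function.Bijective (InducedAux.bd i) := by
  haveI : NeZero n := ⟨by omega⟩
  obtain ⟨c, hc⟩ := hodd
  rw [Fintype.bijective_iff_injective_and_card]
  refine ⟨?_, rfl⟩
  rw [injective_iff_map_eq_one]
  rintro (k | k) h
  · replace h : DihedralGroup.r (k + k) = DihedralGroup.r 0 := h
    have hk : k + k = 0 := DihedralGroup.r.inj h
    have hv : ((k.val + k.val : ℕ) : ZMod n) = 0 := by
      rw [Nat.cast_add, ZMod.natCast_zmod_val, hk]
    rw [ZMod.natCast_eq_zero_iff] at hv
    have hco : Nat.Coprime n 2 := Nat.coprime_comm.mp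
      ((Nat.prime_two.coprime_iff_not_dvd).mpr (by omega))
    have hdvd : n ∣ k.val * 2 := by
      have h5 : k.val + k.val = k.val * 2 := by ring
      rwa [h5] at hv
    have h2 : n ∣ k.val := hco.dvd_of_dvd_mul_right hdvd
    have h3 : k.val = 0 := Nat.eq_zero_of_dvd_of_lt h2 (ZMod.val_lt k)
    have h4 : k = 0 := by rw [← ZMod.natCast_zmod_val k, h3, Nat.cast_zero]
    rw [h4]
    rfl
  · replace h : DihedralGroup.sr (i + k + k) = DihedralGroup.r 0 := h
    cases h

lemma bd_two_add (n : ℕ) (hn : 1 ≤ n) (hev : Even n) (k : ZMod n) :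
    k + k = 0 ↔ (k = 0 ∨ k = ((n / 2 : ℕ) : ZMod n)) := by
  haveI : NeZero n := ⟨by omega⟩
  obtain ⟨c, hc⟩ := hev
  have hm : n / 2 = c := by omega
  constructor
  · intro h
    have hv : ((k.val + k.val : ℕ) : ZMod n) = 0 := by
      rw [Nat.cast_add, ZMod.natCast_zmod_val, h]
    rw [ZMod.natCast_eq_zero_iff] at hv
    obtain ⟨d, hd⟩ := hv
    have hlt := ZMod.val_lt k
    have hd1 : d ≤ 1 := by
      by_contra hcon
      push_neg at hcon
      have : n * 2 ≤ n * d := Nat.mul_le_mul_left n hcon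
      omega
    have : k.val = 0 ∨ k.val = c := by interval_cases d <;> omega
    rcases this with h0 | h0
    · left
      rw [← ZMod.natCast_zmod_val k, h0, Nat.cast_zero]
    · right
      rw [← ZMod.natCast_zmod_val k, h0, hm]
  · rintro (rfl | rfl)
    · rw [add_zero]
    · rw [← Nat.cast_add, hm, show c + c = n by omega, ZMod.natCast_self]

lemma bd_ker_even {n : ℕ} (hn : 1 ≤ n) (i : ZMod n) (hev : Even n) :
    Nat.card (InducedAux.bd i).ker = 2 := by
  haveI : NeZero n := ⟨by omega⟩
  have hne : (1 : DihedralGroup n) ≠ DihedralGroup.r ((n / 2 : ℕ) : ZMod n) := by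
    rw [DihedralGroup.one_def]
    intro h
    have h2 : (((n / 2 : ℕ) : ZMod n)) = 0 := (DihedralGroup.r.inj h).symm
    rw [ZMod.natCast_eq_zero_iff] at h2
    obtain ⟨c, hc⟩ := hev
    have : n / 2 = c := by omega
    have h3 := Nat.le_of_dvd (by omega) h2
    omega
  have hker : ((InducedAux.bd i).ker : Set (DihedralGroup n)) =
      {1, DihedralGroup.r ((n / 2 : ℕ) : ZMod n)} := by
    ext x
    simp only [SetLike.mem_coe, MonoidHom.mem_ker, Set.mem_insert_iff, Set.mem_singleton_iff]
    rcases x with k | k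
    · constructor
      · intro h
        replace h : DihedralGroup.r (k + k) = DihedralGroup.r 0 := h
        have hk := (bd_two_add n hn hev k).mp (DihedralGroup.r.inj h)
        rcases hk with rfl | rfl
        · left; rfl
        · right; rfl
      · rintro (h | h)
        · rw [DihedralGroup.one_def] at h
          have hk : k = 0 := DihedralGroup.r.inj h
          subst hk
          show DihedralGroup.r ((0 : ZMod n) + 0) = 1
          rw [add_zero, DihedralGroup.one_def]
        · have hk : k = ((n / 2 : ℕ) : ZMod n) := DihedralGroup.r.inj h
          subst hk
          show DihedralGroup.r (_ + _) = 1
          rw [(bd_two_add n hn hev _).mpr (Or.inr rfl), DihedralGroup.one_def]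
    · constructor
      · intro h
        replace h : DihedralGroup.sr (i + k + k) = DihedralGroup.r 0 := h
        cases h
      · rintro (h | h)
        · rw [DihedralGroup.one_def] at h; cases h
        · cases h
  have h6 : Nat.card ((InducedAux.bd i).ker : Set (DihedralGroup n)) = 2 := by
    rw [hker, Nat.card_coe_set_eq, Set.ncard_pair hne]
  exact h6

lemma bd_index_even {n : ℕ} (hn : 1 ≤ n) (i : ZMod n) (hev : Even n) :
    (InducedAux.bd i).range.index = 2 := by
  haveI : NeZero n := ⟨by omega⟩
  have hcard : Nat.card (DihedralGroup n) = 2 * n := DihedralGroup.nat_card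
  have h1 : Nat.card (DihedralGroup n) =
      Nat.card (DihedralGroup n ⧸ (InducedAux.bd i).ker) * Nat.card (InducedAux.bd i).ker :=
    Subgroup.card_eq_card_quotient_mul_card_subgroup _
  have h2 : Nat.card (DihedralGroup n ⧸ (InducedAux.bd i).ker) =
      Nat.card (InducedAux.bd i).range :=
    Nat.card_congr (QuotientGroup.quotientKerEquivRange (InducedAux.bd i)).toEquiv
  rw [h2, bd_ker_even hn i hev, hcard] at h1
  have h3 : Nat.card (InducedAux.bd i).range = n := by omega
  have h4 := Subgroup.index_mul_card (InducedAux.bd i).range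
  rw [h3, hcard] at h4
  exact Nat.eq_of_mul_eq_mul_right (by omega) (h4.trans (by ring))

/-- Let `Q = D_{2n}` (`n ≥ 1`) be the dihedral group of order `2n`, `P` the subgroup of
order 2 generated by a reflection `sr i`, and consider the identity crossed module on `P`
and the inclusion `ι : P → Q`.  For any induced crossed module `(∂ : I → Q, j)` of
`(id_P : P → P)` along `ι`, the group `I` is isomorphic to `D_{2n}`; if `n` is odd then
`∂` is an isomorphism, while if `n` is even then `ker ∂` has order 2 and the image of `∂`
has index 2 in `Q`. -/
theorem induced_reflection_dihedral {n : ℕ} (hn : 1 ≤ n) (i : ZMod n)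
    (P : Subgroup (DihedralGroup n)) (hP : P = Subgroup.zpowers (DihedralGroup.sr i))
    {I : Type} [Group I] (Y : CrossedModule I (DihedralGroup n)) (j : ↥P →* I)
    (hInd : IsInducedCrossedModule (conjCM ↥P) P.subtype Y j) :
    Nonempty (I ≃* DihedralGroup n) ∧
    (Odd n → Function.Bijective Y.μ) ∧
    (Even n → Nat.card Y.μ.ker = 2 ∧ Y.μ.range.index = 2) := by
  haveI : NeZero n := ⟨by omega⟩
  have hY0 := Y0_induced hn i P hP
  obtain ⟨φ, ⟨hφ1, hφ2, hφ3⟩, hφu⟩ :=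
    hInd.2 (DihedralGroup n) (Y0 i) (j0 i P hP) (j0_morphism i P hP)
  obtain ⟨ψ, ⟨hψ1, hψ2, hψ3⟩, hψu⟩ := hY0.2 I Y j hInd.1
  have hli : ∀ x, ψ (φ x) = x := by
    obtain ⟨χ, hχ, hχu⟩ := hInd.2 I Y j hInd.1
    have e1 : ψ.comp φ = χ := hχu (ψ.comp φ)
      ⟨fun x => by rw [MonoidHom.comp_apply, hψ1, hφ1],
       fun x q => by rw [MonoidHom.comp_apply, hφ2, hψ2, MonoidHom.comp_apply],
       fun m => by rw [MonoidHom.comp_apply, hφ3, hψ3]⟩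
    have e2 : MonoidHom.id I = χ := hχu (MonoidHom.id I)
      ⟨fun x => rfl, fun x q => rfl, fun m => rfl⟩
    intro x
    exact DFunLike.congr_fun (e1.trans e2.symm) x
  have hri : ∀ x, φ (ψ x) = x := by
    obtain ⟨χ, hχ, hχu⟩ := hY0.2 (DihedralGroup n) (Y0 i) (j0 i P hP) (j0_morphism i P hP)
    have e1 : φ.comp ψ = χ := hχu (φ.comp ψ)
      ⟨fun x => by rw [MonoidHom.comp_apply, hφ1, hψ1],
       fun x q => by rw [MonoidHom.comp_apply, hψ2, hφ2, MonoidHom.comp_apply],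
       fun m => by rw [MonoidHom.comp_apply, hψ3, hφ3]⟩
    have e2 : MonoidHom.id (DihedralGroup n) = χ := hχu (MonoidHom.id (DihedralGroup n))
      ⟨fun x => rfl, fun x q => rfl, fun m => rfl⟩
    intro x
    exact DFunLike.congr_fun (e1.trans e2.symm) x
  have e : I ≃* DihedralGroup n := ⟨⟨φ, ψ, hli, hri⟩, map_mul φ⟩
  have hμeq : ∀ x, Y.μ x = (InducedAux.bd i) (φ x) := fun x => (hφ1 x).symm
  refine ⟨⟨e⟩, ?_, ?_⟩
  · intro hodd
    have hb := bd_bijective_odd hn i hodd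
    have hfun : (Y.μ : I → DihedralGroup n) = (InducedAux.bd i) ∘ φ := funext hμeq
    rw [show (Y.μ : I → DihedralGroup n) = (InducedAux.bd i) ∘ φ from hfun]
    exact hb.comp ⟨fun a b h => by rw [← hli a, h, hli], fun y => ⟨ψ y, hri y⟩⟩
  · intro hev
    constructor
    · have hequiv : Y.μ.ker ≃ (InducedAux.bd i).ker :=
        { toFun := fun x => ⟨φ x.1, by
            rw [MonoidHom.mem_ker, ← hμeq]
            exact x.2⟩
          invFun := fun y => ⟨ψ y.1, by
            rw [MonoidHom.mem_ker, hμeq, hri]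
            exact y.2⟩
          left_inv := fun x => Subtype.ext (hli x.1)
          right_inv := fun y => Subtype.ext (hri y.1) }
      rw [Nat.card_congr hequiv]
      exact bd_ker_even hn i hev
    · have hrange : Y.μ.range = (InducedAux.bd i).range := by
        ext y
        simp only [MonoidHom.mem_range]
        constructor
        · rintro ⟨x, rfl⟩
          exact ⟨φ x, (hμeq x).symm⟩
        · rintro ⟨z, rfl⟩
          exact ⟨ψ z, by rw [hμeq, hri]⟩
      rw [hrange]
      exact bd_index_even hn i hev
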